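/- Fix s ∈ C. Let H_s be the associative C-algebra generated by x, y, σ subject to the relations σ^2 = 1, σx = -xσ, σy = -yσ, and yx - xy = s·σ. Then H_s is a free C-module with basis {x^a y^b, x^a y^b σ : a, b ≥ 0}; in particular H_s ≅ C[x,y] ⊗ C[Z_2] as a C-vector space. -/

import Mathlib

open scoped TensorProduct

namespace Stmt13

/-- The defining relations of the rank-one symplectic reflection algebra `H_s`:
generators `x = ι 0`, `y = ι 1`, `σ = ι 2` with `σ² = 1`, `σx = -xσ`, `σy = -yσ`,
`yx - xy = s·σ`. -/
inductive Rel (s : ℂ) : FreeAlgebra ℂ (Fin 3) → FreeAlgebra ℂ (Fin 3) → Prop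
  | sigma_sq : Rel s (FreeAlgebra.ι ℂ 2 * FreeAlgebra.ι ℂ 2) 1
  | sigma_x : Rel s (FreeAlgebra.ι ℂ 2 * FreeAlgebra.ι ℂ 0)
      (-(FreeAlgebra.ι ℂ 0 * FreeAlgebra.ι ℂ 2))
  | sigma_y : Rel s (FreeAlgebra.ι ℂ 2 * FreeAlgebra.ι ℂ 1)
      (-(FreeAlgebra.ι ℂ 1 * FreeAlgebra.ι ℂ 2))
  | comm : Rel s (FreeAlgebra.ι ℂ 1 * FreeAlgebra.ι ℂ 0 - FreeAlgebra.ι ℂ 0 * FreeAlgebra.ι ℂ 1)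
      (algebraMap ℂ (FreeAlgebra ℂ (Fin 3)) s * FreeAlgebra.ι ℂ 2)

noncomputable section
namespace Aux

abbrev V := (ℕ × ℕ × Bool) →₀ ℂ

/-- coefficient: 0 if even, 1 if odd -/
def cc (a : ℕ) : ℂ := (1 - (-1)^a)/2

@[simp] lemma cc_zero : cc 0 = 0 := by simp [cc]

def Xop : V →ₗ[ℂ] V := Finsupp.lsum ℂ fun p => Finsupp.lsingle (p.1+1, p.2.1, p.2.2)
def Sop : V →ₗ[ℂ] V := Finsupp.lsum ℂ fun p => ((-1:ℂ)^(p.1+p.2.1)) • Finsupp.lsingle (p.1, p.2.1, !p.2.2)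
def Yop (s : ℂ) : V →ₗ[ℂ] V := Finsupp.lsum ℂ fun p =>
  Finsupp.lsingle (p.1, p.2.1+1, p.2.2) + (s * (-1)^p.2.1 * cc p.1) • Finsupp.lsingle (p.1-1, p.2.1, !p.2.2)

@[simp] lemma Xop_single (p : ℕ × ℕ × Bool) (c : ℂ) :
    Xop (Finsupp.single p c) = Finsupp.single (p.1+1, p.2.1, p.2.2) c := by
  simp [Xop]

@[simp] lemma Sop_single (p : ℕ × ℕ × Bool) (c : ℂ) :
    Sop (Finsupp.single p c) = ((-1:ℂ)^(p.1+p.2.1)) • Finsupp.single (p.1, p.2.1, !p.2.2) c := by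
  simp [Sop]

@[simp] lemma Yop_single (s : ℂ) (p : ℕ × ℕ × Bool) (c : ℂ) :
    Yop s (Finsupp.single p c) = Finsupp.single (p.1, p.2.1+1, p.2.2) c
      + (s * (-1)^p.2.1 * cc p.1) • Finsupp.single (p.1-1, p.2.1, !p.2.2) c := by
  simp [Yop]

lemma rel1 : Sop ∘ₗ Sop = LinearMap.id := by
  refine Finsupp.lhom_ext fun p c => ?_
  rcases p with ⟨a, b, ε⟩
  simp only [LinearMap.comp_apply, LinearMap.id_apply, Sop_single, map_smul, Bool.not_not,
    smul_smul, ← mul_pow]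
  norm_num

lemma rel2 : Sop ∘ₗ Xop = -(Xop ∘ₗ Sop) := by
  refine Finsupp.lhom_ext fun p c => ?_
  rcases p with ⟨a, b, ε⟩
  simp only [LinearMap.comp_apply, LinearMap.neg_apply, Sop_single, Xop_single, map_smul,
    Finsupp.smul_single, ← Finsupp.single_neg]
  congr 1
  rw [add_right_comm, pow_succ]
  simp only [smul_eq_mul]
  ring

lemma rel3 (s : ℂ) : Sop ∘ₗ (Yop s) = -((Yop s) ∘ₗ Sop) := by
  refine Finsupp.lhom_ext fun p c => ?_
  rcases p with ⟨a, b, ε⟩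
  rcases a with _ | a <;>
  · simp only [LinearMap.comp_apply, LinearMap.neg_apply, Sop_single, Yop_single, map_add,
      map_smul, Bool.not_not, Nat.add_sub_cancel, Nat.zero_sub, cc, pow_succ, pow_zero, pow_add]
    module

lemma rel4 (s : ℂ) : (Yop s) ∘ₗ Xop - Xop ∘ₗ (Yop s) = s • Sop := by
  refine Finsupp.lhom_ext fun p c => ?_
  rcases p with ⟨a, b, ε⟩
  rcases a with _ | a <;>
  · simp only [LinearMap.sub_apply, LinearMap.comp_apply, LinearMap.smul_apply, Sop_single,
      Yop_single, Xop_single, map_add, map_smul, Bool.not_not, Nat.add_sub_cancel, Nat.zero_sub,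
      cc, pow_succ, pow_zero, pow_add]
    module

def rho (s : ℂ) : FreeAlgebra ℂ (Fin 3) →ₐ[ℂ] Module.End ℂ V :=
  FreeAlgebra.lift ℂ ![Xop, Yop s, Sop]

@[simp] lemma rho_x (s : ℂ) : rho s (FreeAlgebra.ι ℂ 0) = Xop := by
  simp [rho]
@[simp] lemma rho_y (s : ℂ) : rho s (FreeAlgebra.ι ℂ 1) = Yop s := by
  simp [rho]
@[simp] lemma rho_s (s : ℂ) : rho s (FreeAlgebra.ι ℂ 2) = Sop := by
  simp [rho]

lemma rho_rel (s : ℂ) ⦃f g : FreeAlgebra ℂ (Fin 3)⦄ (h : Rel s f g) : rho s f = rho s g := by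
  induction h with
  | sigma_sq => simpa [Module.End.mul_eq_comp, Module.End.one_eq_id] using rel1
  | sigma_x => simpa [Module.End.mul_eq_comp] using rel2
  | sigma_y => simpa [Module.End.mul_eq_comp] using rel3 s
  | comm =>
      simpa [Module.End.mul_eq_comp, Algebra.smul_def (A := Module.End ℂ V)] using rel4 s

def phi (s : ℂ) : RingQuot (Rel s) →ₐ[ℂ] Module.End ℂ V :=
  RingQuot.liftAlgHom ℂ ⟨rho s, rho_rel s⟩

@[simp] lemma phi_mk (s : ℂ) (f : FreeAlgebra ℂ (Fin 3)) :
    phi s (RingQuot.mkAlgHom ℂ (Rel s) f) = rho s f := by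
  simp [phi, RingQuot.liftAlgHom_mkAlgHom_apply]


variable (s : ℂ)

def Xq : RingQuot (Rel s) := RingQuot.mkAlgHom ℂ (Rel s) (FreeAlgebra.ι ℂ 0)
def Yq : RingQuot (Rel s) := RingQuot.mkAlgHom ℂ (Rel s) (FreeAlgebra.ι ℂ 1)
def Sq : RingQuot (Rel s) := RingQuot.mkAlgHom ℂ (Rel s) (FreeAlgebra.ι ℂ 2)

def bv : ℕ × ℕ × Bool → RingQuot (Rel s) := fun p =>
  Xq s ^ p.1 * Yq s ^ p.2.1 * (cond p.2.2 (Sq s) 1)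

lemma hSS : Sq s * Sq s = 1 := by
  simpa [Xq, Yq, Sq, map_mul] using RingQuot.mkAlgHom_rel ℂ (Rel.sigma_sq (s := s))

lemma hSX : Sq s * Xq s = -(Xq s * Sq s) := by
  simpa [Xq, Yq, Sq, map_mul] using RingQuot.mkAlgHom_rel ℂ (Rel.sigma_x (s := s))

lemma hSY : Sq s * Yq s = -(Yq s * Sq s) := by
  simpa [Xq, Yq, Sq, map_mul] using RingQuot.mkAlgHom_rel ℂ (Rel.sigma_y (s := s))

lemma hYX : Yq s * Xq s = Xq s * Yq s + s • Sq s := by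
  have := RingQuot.mkAlgHom_rel ℂ (Rel.comm (s := s))
  rw [map_sub, map_mul, map_mul, map_mul, AlgHom.commutes] at this
  rw [sub_eq_iff_eq_add] at this
  rw [Xq, Yq, Sq, this, Algebra.smul_def, add_comm]

open Aux in
lemma ev_bv (p : ℕ × ℕ × Bool) :
    (phi s (bv s p)) (Finsupp.single (0,0,false) (1:ℂ)) = Finsupp.single p 1 := by
  rcases p with ⟨a, b, ε⟩
  have hb : ∀ ε' : Bool, ((Yop s) ^ b) (Finsupp.single (0,0,ε') (1:ℂ))
      = Finsupp.single (0,b,ε') 1 := by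
    intro ε'
    induction b with
    | zero => simp
    | succ n ih => rw [pow_succ', Module.End.mul_apply, ih]; simp
  have ha : ∀ q : ℕ × ℕ × Bool, ∀ c : ℂ, (Xop ^ a) (Finsupp.single q c)
      = Finsupp.single (q.1 + a, q.2.1, q.2.2) c := by
    intro q c
    induction a with
    | zero => simp
    | succ n ih => rw [pow_succ', Module.End.mul_apply, ih, Xop_single]; rfl
  have hphi : phi s (bv s (a,b,ε)) = Xop ^ a * (Yop s) ^ b * (cond ε Sop 1) := by
    rcases ε <;>
      simp [bv, Xq, Yq, Sq, map_mul, map_pow]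
  rw [hphi]
  rcases ε with _ | _
  · simp only [cond, Module.End.mul_apply, Module.End.one_apply, hb, ha]
    simp
  · simp only [cond, Module.End.mul_apply, Sop_single]
    simp only [map_smul, hb, ha]
    simp


lemma hSXn (a : ℕ) : Sq s * Xq s ^ a = ((-1:ℂ)^a) • (Xq s ^ a * Sq s) := by
  induction a with
  | zero => simp
  | succ n ih =>
    have hSX' : Sq s * Xq s = ((-1:ℂ)) • (Xq s * Sq s) := by
      rw [hSX]; module
    rw [pow_succ' (Xq s), ← mul_assoc, hSX', smul_mul_assoc, mul_assoc, ih, mul_smul_comm,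
      smul_smul, ← pow_succ' (-1:ℂ), ← mul_assoc, ← pow_succ' (Xq s)]

lemma hSYn (b : ℕ) : Sq s * Yq s ^ b = ((-1:ℂ)^b) • (Yq s ^ b * Sq s) := by
  induction b with
  | zero => simp
  | succ n ih =>
    have hSY' : Sq s * Yq s = ((-1:ℂ)) • (Yq s * Sq s) := by
      rw [hSY]; module
    rw [pow_succ' (Yq s), ← mul_assoc, hSY', smul_mul_assoc, mul_assoc, ih, mul_smul_comm,
      smul_smul, ← pow_succ' (-1:ℂ), ← mul_assoc, ← pow_succ' (Yq s)]

lemma S_mul_bv (a b : ℕ) (ε : Bool) :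
    Sq s * bv s (a, b, ε) = ((-1:ℂ)^(a+b)) • bv s (a, b, !ε) := by
  have h1 : ∀ u : RingQuot (Rel s),
      Sq s * (Xq s ^ a * u) = ((-1:ℂ)^a) • (Xq s ^ a * (Sq s * u)) := fun u => by
    rw [← mul_assoc, hSXn, smul_mul_assoc, mul_assoc]
  have h2 : ∀ u : RingQuot (Rel s),
      Sq s * (Yq s ^ b * u) = ((-1:ℂ)^b) • (Yq s ^ b * (Sq s * u)) := fun u => by
    rw [← mul_assoc, hSYn, smul_mul_assoc, mul_assoc]
  rcases ε with _ | _ <;>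
    simp only [bv, cond, mul_assoc, h1, h2, mul_one, hSS, hSYn, pow_add, smul_smul,
      mul_smul_comm, Bool.not_false, Bool.not_true]

def W : Submodule ℂ (RingQuot (Rel s)) := Submodule.span ℂ (Set.range (bv s))

lemma bv_mem (p : ℕ × ℕ × Bool) : bv s p ∈ W s :=
  Submodule.subset_span ⟨p, rfl⟩

lemma X_mul_bv (a b : ℕ) (ε : Bool) : Xq s * bv s (a, b, ε) = bv s (a+1, b, ε) := by
  simp only [bv, pow_succ' (Xq s), mul_assoc]

lemma X_mul_mem {w : RingQuot (Rel s)} (hw : w ∈ W s) : Xq s * w ∈ W s := by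
  induction hw using Submodule.span_induction with
  | mem w hw => obtain ⟨⟨a, b, ε⟩, rfl⟩ := hw; rw [X_mul_bv]; exact bv_mem s _
  | zero => simp [Submodule.zero_mem]
  | add u v _ _ hu hv => rw [mul_add]; exact Submodule.add_mem _ hu hv
  | smul c u _ hu => rw [mul_smul_comm]; exact Submodule.smul_mem _ _ hu

lemma S_mul_mem {w : RingQuot (Rel s)} (hw : w ∈ W s) : Sq s * w ∈ W s := by
  induction hw using Submodule.span_induction with
  | mem w hw =>
      obtain ⟨⟨a, b, ε⟩, rfl⟩ := hw
      rw [S_mul_bv]; exact Submodule.smul_mem _ _ (bv_mem s _)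
  | zero => simp [Submodule.zero_mem]
  | add u v _ _ hu hv => rw [mul_add]; exact Submodule.add_mem _ hu hv
  | smul c u _ hu => rw [mul_smul_comm]; exact Submodule.smul_mem _ _ hu

lemma Y_mul_bv_mem (b : ℕ) (ε : Bool) : ∀ a : ℕ, Yq s * bv s (a, b, ε) ∈ W s := by
  intro a
  induction a with
  | zero =>
      have : Yq s * bv s (0, b, ε) = bv s (0, b+1, ε) := by
        simp only [bv, pow_zero, one_mul, pow_succ' (Yq s), mul_assoc]
      rw [this]; exact bv_mem s _
  | succ n ih =>
      have : Yq s * bv s (n+1, b, ε)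
          = Xq s * (Yq s * bv s (n, b, ε)) + s • (Sq s * bv s (n, b, ε)) := by
        have hb : bv s (n+1, b, ε) = Xq s * bv s (n, b, ε) := (X_mul_bv s n b ε).symm
        rw [hb, ← mul_assoc, hYX, add_mul, smul_mul_assoc, mul_assoc]
      rw [this]
      exact Submodule.add_mem _ (X_mul_mem s ih) (Submodule.smul_mem _ _ (S_mul_mem s (bv_mem s _)))

lemma Y_mul_mem {w : RingQuot (Rel s)} (hw : w ∈ W s) : Yq s * w ∈ W s := by
  induction hw using Submodule.span_induction with
  | mem w hw => obtain ⟨⟨a, b, ε⟩, rfl⟩ := hw; exact Y_mul_bv_mem s b ε a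
  | zero => simp [Submodule.zero_mem]
  | add u v _ _ hu hv => rw [mul_add]; exact Submodule.add_mem _ hu hv
  | smul c u _ hu => rw [mul_smul_comm]; exact Submodule.smul_mem _ _ hu

lemma one_eq_bv : (1 : RingQuot (Rel s)) = bv s (0, 0, false) := by simp [bv]

lemma W_top : W s = ⊤ := by
  rw [eq_top_iff]
  rintro r -
  obtain ⟨f, rfl⟩ := RingQuot.mkAlgHom_surjective ℂ (Rel s) r
  have key : ∀ f : FreeAlgebra ℂ (Fin 3), ∀ w ∈ W s,
      RingQuot.mkAlgHom ℂ (Rel s) f * w ∈ W s := by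
    intro f
    induction f using FreeAlgebra.induction with
    | grade0 c =>
        intro w hw
        rw [AlgHom.commutes, (Algebra.smul_def (A := RingQuot (Rel s)) c w).symm]
        exact Submodule.smul_mem _ _ hw
    | grade1 i =>
        intro w hw
        fin_cases i
        · exact X_mul_mem s hw
        · exact Y_mul_mem s hw
        · exact S_mul_mem s hw
    | mul f g hf hg =>
        intro w hw
        rw [map_mul, mul_assoc]
        exact hf _ (hg _ hw)
    | add f g hf hg =>
        intro w hw
        rw [map_add, add_mul]
        exact Submodule.add_mem _ (hf _ hw) (hg _ hw)
  have := key f 1 (one_eq_bv s ▸ bv_mem s (0, 0, false))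
  rwa [mul_one] at this

def ev : RingQuot (Rel s) →ₗ[ℂ] V :=
  (LinearMap.applyₗ (Finsupp.single ((0:ℕ), (0:ℕ), false) (1:ℂ))).comp (phi s).toLinearMap

lemma ev_bv' (p : ℕ × ℕ × Bool) : ev s (bv s p) = Finsupp.single p 1 := by
  exact ev_bv s p

lemma bv_indep : LinearIndependent ℂ (bv s) := by
  apply LinearIndependent.of_comp (ev s)
  have : (ev s ∘ bv s) = fun p => (Finsupp.basisSingleOne (R := ℂ) (ι := ℕ × ℕ × Bool)) p := by
    funext p
    simp [Function.comp, ev_bv', Finsupp.coe_basisSingleOne]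
  rw [this]
  exact (Finsupp.basisSingleOne).linearIndependent

def basisH : Module.Basis (ℕ × ℕ × Bool) ℂ (RingQuot (Rel s)) :=
  Module.Basis.mk (bv_indep s) (by rw [← W, W_top])

@[simp] lemma basisH_apply (p : ℕ × ℕ × Bool) : basisH s p = bv s p := Module.Basis.mk_apply _ _ _


def e2 : Bool ≃ Multiplicative (ZMod 2) := Fintype.equivOfCardEq (by simp)

def e1 : ℕ × ℕ ≃ (Fin 2 →₀ ℕ) :=
  (piFinTwoEquiv fun _ => ℕ).symm.trans (Finsupp.equivFunOnFinite).symm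

def eIdx : (ℕ × ℕ × Bool) ≃ ((Fin 2 →₀ ℕ) × Multiplicative (ZMod 2)) :=
  (Equiv.prodAssoc ℕ ℕ Bool).symm.trans (Equiv.prodCongr e1 e2)

end Aux
end


open Stmt13.Aux in
/-- PBW property: `H_s` is free as a `ℂ`-module with basis
`{x^a y^b, x^a y^b σ : a, b ≥ 0}`; in particular `H_s ≅ ℂ[x,y] ⊗ ℂ[ℤ/2]` as a
`ℂ`-vector space. -/
theorem stmt_13 (s : ℂ) :
    (∃ b : Module.Basis (ℕ × ℕ × Bool) ℂ (RingQuot (Rel s)),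
      ∀ a c : ℕ,
        b (a, c, false) =
          RingQuot.mkAlgHom ℂ (Rel s) (FreeAlgebra.ι ℂ 0 ^ a * FreeAlgebra.ι ℂ 1 ^ c) ∧
        b (a, c, true) =
          RingQuot.mkAlgHom ℂ (Rel s)
            (FreeAlgebra.ι ℂ 0 ^ a * FreeAlgebra.ι ℂ 1 ^ c * FreeAlgebra.ι ℂ 2)) ∧
    Nonempty (RingQuot (Rel s) ≃ₗ[ℂ]
      (MvPolynomial (Fin 2) ℂ ⊗[ℂ] MonoidAlgebra ℂ (Multiplicative (ZMod 2)))) := by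
  constructor
  · refine ⟨basisH s, fun a c => ⟨?_, ?_⟩⟩
    · rw [basisH_apply]
      simp [bv, Xq, Yq, map_mul, map_pow]
    · rw [basisH_apply]
      simp [bv, Xq, Yq, Sq, map_mul, map_pow]
  · refine ⟨(basisH s).equiv
      (Module.Basis.tensorProduct (MvPolynomial.basisMonomials (Fin 2) ℂ)
        (MonoidAlgebra.basis _ _ : Module.Basis (Multiplicative (ZMod 2)) ℂ
          (MonoidAlgebra ℂ (Multiplicative (ZMod 2))))) eIdx⟩


end Stmt13
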